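/- Per-server load ordering in a duopoly: fix service capacities N₁ > N₂ ≥ 1 (naturals), Λ > 0 and μ > 0, and let (λ₁, λ₂) be the Wardrop equilibrium for capacities (N₁, N₂). Then λ₁/N₁ > Λ/(N₁ + N₂) > λ₂/N₂, i.e. the larger coalition enjoys a strictly higher offered load per server. -/

import Mathlib

open Finset

/-- The Erlang-B blocking probability with `M` servers and offered load `a`:
`B(M, a) = (a^M / M!) / (∑_{j=0}^{M} a^j / j!)`. -/
noncomputable def ErlangB (M : ℕ) (a : ℝ) : ℝ :=
  (a ^ M / (Nat.factorial M : ℝ)) / (∑ j ∈ Finset.range (M + 1), a ^ j / (Nat.factorial j : ℝ))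

/-- The reciprocal of Erlang-B, written as a sum of products. -/
noncomputable def ErlangT (M : ℕ) (a : ℝ) : ℝ :=
  ∑ i ∈ Finset.range (M + 1), ∏ t ∈ Finset.range i, (((M : ℝ) - (t : ℝ)) / a)

lemma prod_desc_mul_factorial (M : ℕ) :
    ∀ i : ℕ, i ≤ M →
      (∏ t ∈ Finset.range i, ((M : ℝ) - (t : ℝ))) * ((M - i).factorial : ℝ)
        = (M.factorial : ℝ) := by
  intro i
  induction i with
  | zero => simp
  | succ i ih =>
    intro hi
    have hiM : i ≤ M := by omega
    have h3 : (M - (i + 1)) + 1 = M - i := by omega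
    rw [Finset.prod_range_succ]
    have : ((M - i).factorial : ℝ) = ((M : ℝ) - (i : ℝ)) * ((M - (i + 1)).factorial : ℝ) := by
      rw [← h3, Nat.factorial_succ]
      push_cast [Nat.cast_sub hi]
      ring
    calc (∏ t ∈ Finset.range i, ((M : ℝ) - (t : ℝ))) * ((M : ℝ) - (i : ℝ))
          * ((M - (i + 1)).factorial : ℝ)
        = (∏ t ∈ Finset.range i, ((M : ℝ) - (t : ℝ))) * ((M - i).factorial : ℝ) := by
          rw [this]; ring
      _ = (M.factorial : ℝ) := ih hiM

lemma erlangT_eq (M : ℕ) {a : ℝ} (ha : 0 < a) :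
    ErlangT M a
      = (∑ j ∈ Finset.range (M + 1), a ^ j / (Nat.factorial j : ℝ))
        * ((Nat.factorial M : ℝ) / a ^ M) := by
  rw [ErlangT, Finset.sum_mul]
  rw [← Finset.sum_range_reflect (fun j => a ^ j / (Nat.factorial j : ℝ) * ((Nat.factorial M : ℝ) / a ^ M)) (M + 1)]
  apply Finset.sum_congr rfl
  intro i hi
  have hiM : i ≤ M := by simpa [Nat.lt_succ_iff] using hi
  have hidx : M + 1 - 1 - i = M - i := by omega
  rw [hidx]
  have hfac := prod_desc_mul_factorial M i hiM
  have hfacpos : (0 : ℝ) < ((M - i).factorial : ℝ) := by positivity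
  have hpow : a ^ (M - i) * a ^ i = a ^ M := by
    rw [← pow_add]; congr 1; omega
  have hprod : (∏ t ∈ Finset.range i, (((M : ℝ) - (t : ℝ)) / a))
      = (∏ t ∈ Finset.range i, ((M : ℝ) - (t : ℝ))) / a ^ i := by
    rw [Finset.prod_div_distrib, Finset.prod_const, Finset.card_range]
  rw [hprod, div_mul_div_comm,
    div_eq_div_iff (by positivity) (by positivity)]
  linear_combination (a ^ M) * hfac - (M.factorial : ℝ) * hpow

lemma erlangB_mul_T (M : ℕ) {a : ℝ} (ha : 0 < a) : ErlangB M a * ErlangT M a = 1 := by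
  have hS : 0 < ∑ j ∈ Finset.range (M + 1), a ^ j / (Nat.factorial j : ℝ) :=
    Finset.sum_pos (fun j _ => div_pos (pow_pos ha j) (by positivity))
      ⟨0, Finset.mem_range.2 (Nat.succ_pos M)⟩
  rw [erlangT_eq M ha, ErlangB]
  have h1 : (0:ℝ) < a ^ M := pow_pos ha M
  have h2 : (0:ℝ) < (Nat.factorial M : ℝ) := by positivity
  field_simp

lemma erlangT_lt (N₁ N₂ : ℕ) (hN : N₂ < N₁) {a₁ a₂ : ℝ}
    (ha₁ : 0 < a₁) (ha₂ : 0 < a₂) (hle : a₁ * N₂ ≤ a₂ * N₁) :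
    ErlangT N₂ a₂ < ErlangT N₁ a₁ := by
  have hfac : ∀ t : ℕ, t < N₂ →
      ((N₂ : ℝ) - (t : ℝ)) / a₂ ≤ ((N₁ : ℝ) - (t : ℝ)) / a₁ := by
    intro t ht
    have ht' : (t : ℝ) + 1 ≤ (N₂ : ℝ) := by exact_mod_cast ht
    have hN' : (N₂ : ℝ) < (N₁ : ℝ) := by exact_mod_cast hN
    rw [div_le_div_iff₀ ha₂ ha₁]
    rcases le_total a₁ a₂ with h | h
    · have h1 : (0:ℝ) ≤ (N₂ : ℝ) - t := by linarith
      nlinarith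
    · nlinarith [mul_le_mul_of_nonneg_left h (Nat.cast_nonneg t : (0:ℝ) ≤ (t:ℝ))]
  have hterm : ∀ i ∈ Finset.range (N₂ + 1),
      (∏ t ∈ Finset.range i, (((N₂ : ℝ) - (t : ℝ)) / a₂))
        ≤ ∏ t ∈ Finset.range i, (((N₁ : ℝ) - (t : ℝ)) / a₁) := by
    intro i hi
    have hiN : i ≤ N₂ := by simpa [Nat.lt_succ_iff] using hi
    apply Finset.prod_le_prod
    · intro t ht
      have htN : t < N₂ := lt_of_lt_of_le (Finset.mem_range.1 ht) hiN
      have : (t : ℝ) + 1 ≤ (N₂ : ℝ) := by exact_mod_cast htN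
      exact div_nonneg (by linarith) ha₂.le
    · intro t ht
      exact hfac t (lt_of_lt_of_le (Finset.mem_range.1 ht) hiN)
  have hpos : ∀ i ∈ Finset.range (N₁ + 1),
      (0 : ℝ) < ∏ t ∈ Finset.range i, (((N₁ : ℝ) - (t : ℝ)) / a₁) := by
    intro i hi
    have hiN : i ≤ N₁ := by simpa [Nat.lt_succ_iff] using hi
    apply Finset.prod_pos
    intro t ht
    have htN : t < N₁ := lt_of_lt_of_le (Finset.mem_range.1 ht) hiN
    have : (t : ℝ) + 1 ≤ (N₁ : ℝ) := by exact_mod_cast htN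
    exact div_pos (by linarith) ha₁
  calc ErlangT N₂ a₂
      ≤ ∑ i ∈ Finset.range (N₂ + 1), ∏ t ∈ Finset.range i, (((N₁ : ℝ) - (t : ℝ)) / a₁) :=
        Finset.sum_le_sum hterm
    _ < ErlangT N₁ a₁ := by
        apply Finset.sum_lt_sum_of_subset
          (Finset.range_subset_range.2 (by omega)) (i := N₂ + 1)
          (Finset.mem_range.2 (by omega)) (by simp)
        · exact hpos (N₂ + 1) (Finset.mem_range.2 (by omega))
        · intro j hj _
          exact le_of_lt (hpos j hj)

/-- Per-server load ordering in a duopoly: fix capacities `N₁ > N₂ ≥ 1`, `Λ > 0` and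
`μ > 0`, and let `(λ₁, λ₂)` be the Wardrop equilibrium (positive rates summing to `Λ`
with equal Erlang-B blocking probabilities).  Then
`λ₁/N₁ > Λ/(N₁ + N₂) > λ₂/N₂`. -/
theorem wardrop_duopoly_per_server_load (N₁ N₂ : ℕ) (hN₂ : 1 ≤ N₂) (hN : N₂ < N₁)
    (Λ μ : ℝ) (hΛ : 0 < Λ) (hμ : 0 < μ) (lam₁ lam₂ : ℝ)
    (h₁ : 0 < lam₁) (h₂ : 0 < lam₂) (hsum : lam₁ + lam₂ = Λ)
    (hWE : ErlangB N₁ (lam₁ / μ) = ErlangB N₂ (lam₂ / μ)) :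
    Λ / ((N₁ : ℝ) + (N₂ : ℝ)) < lam₁ / (N₁ : ℝ) ∧
      lam₂ / (N₂ : ℝ) < Λ / ((N₁ : ℝ) + (N₂ : ℝ)) := by
  have ha₁ : 0 < lam₁ / μ := div_pos h₁ hμ
  have ha₂ : 0 < lam₂ / μ := div_pos h₂ hμ
  have hB1 := erlangB_mul_T N₁ ha₁
  have hB2 := erlangB_mul_T N₂ ha₂
  have hBne : ErlangB N₂ (lam₂ / μ) ≠ 0 := by
    intro h; rw [h] at hB2; simp at hB2
  rw [hWE] at hB1
  have hT : ErlangT N₁ (lam₁ / μ) = ErlangT N₂ (lam₂ / μ) :=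
    mul_left_cancel₀ hBne (hB1.trans hB2.symm)
  have hkey : lam₂ * (N₁ : ℝ) < lam₁ * (N₂ : ℝ) := by
    by_contra h
    push_neg at h
    have hle : (lam₁ / μ) * (N₂ : ℝ) ≤ (lam₂ / μ) * (N₁ : ℝ) := by
      rw [div_mul_eq_mul_div, div_mul_eq_mul_div, div_le_div_iff₀ hμ hμ]
      nlinarith [mul_le_mul_of_nonneg_right h hμ.le]
    exact absurd hT (ne_of_gt (erlangT_lt N₁ N₂ hN ha₁ ha₂ hle))
  have hN1pos : (0:ℝ) < (N₁ : ℝ) := by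
    have : 0 < N₁ := by omega
    exact_mod_cast this
  have hN2pos : (0:ℝ) < (N₂ : ℝ) := by exact_mod_cast hN₂
  constructor
  · rw [div_lt_div_iff₀ (by linarith) hN1pos]
    nlinarith
  · rw [div_lt_div_iff₀ hN2pos (by linarith)]
    nlinarith
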